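/- Risk-averse evaluation of the two-state transient chain under Average Value at Risk: (i) for every J ≥ 0 and α ∈ (0,1), inf_{η ∈ ℝ} { η + (1/(2α)) [ (J − η)₊ + (−η)₊ ] } = min(1, 1/(2α)) · J; (ii) consequently, the sequence defined by J₀ = 0 and J_{k+1} = 1 + min(1, 1/(2α)) · J_k satisfies: if 1/2 < α < 1, then J_k converges to 2α/(2α − 1); if 0 < α ≤ 1/2, then J_k → ∞. In particular, the nested (compositional) Average Value at Risk of the total cost of the chain is finite and equal to 2α/(2α−1) when α > 1/2, and it has no finite limit when 0 < α ≤ 1/2. -/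

import Mathlib

open MeasureTheory Filter Topology

/-- **Risk-averse evaluation of the two-state transient chain under Average Value at Risk.**
(i) For every `J ≥ 0` and `α ∈ (0,1)`,
`inf_{η ∈ ℝ} { η + (1/(2α))[(J − η)₊ + (−η)₊] } = min(1, 1/(2α)) · J`.
(ii) Consequently, the nested AVaR values `J₀ = 0`, `J_{k+1} = 1 + min(1, 1/(2α)) · J_k`
converge to `2α/(2α − 1)` when `1/2 < α < 1`, and diverge to `∞` when `0 < α ≤ 1/2`. -/
theorem avar_two_state_chain
    (α : ℝ) (hα0 : 0 < α) (hα1 : α < 1) :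
    (∀ J : ℝ, 0 ≤ J →
      (⨅ η : ℝ, (η + (1 / (2 * α)) * (max (J - η) 0 + max (-η) 0)))
        = min 1 (1 / (2 * α)) * J) ∧
    (∀ Jseq : ℕ → ℝ, Jseq 0 = 0 →
      (∀ k, Jseq (k + 1) = 1 + min 1 (1 / (2 * α)) * Jseq k) →
      ((1 / 2 < α → Tendsto Jseq atTop (𝓝 (2 * α / (2 * α - 1)))) ∧
       (α ≤ 1 / 2 → Tendsto Jseq atTop atTop))) := by
  set c : ℝ := 1 / (2 * α) with hcdef
  have hc0 : 0 < c := by positivity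
  have hchalf : 1 / 2 < c := by
    rw [hcdef, lt_div_iff₀ (by linarith)]; linarith
  have hmle1 : min 1 c ≤ 1 := min_le_left _ _
  have hmlec : min 1 c ≤ c := min_le_right _ _
  have hm0 : 0 ≤ min 1 c := le_min zero_le_one hc0.le
  constructor
  · intro J hJ
    have lower : ∀ η : ℝ, min 1 c * J ≤ η + c * (max (J - η) 0 + max (-η) 0) := by
      intro η
      have h1 : J - η ≤ max (J - η) 0 := le_max_left _ _
      have h2 : (0:ℝ) ≤ max (J - η) 0 := le_max_right _ _
      have h3 : -η ≤ max (-η) 0 := le_max_left _ _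
      have h4 : (0:ℝ) ≤ max (-η) 0 := le_max_right _ _
      rcases le_or_gt 0 η with hη | hη
      · nlinarith [mul_nonneg hm0 (sub_nonneg.2 h1), mul_nonneg (sub_nonneg.2 hmlec) h2,
          mul_nonneg (sub_nonneg.2 hmle1) hη, mul_nonneg hc0.le h4]
      · nlinarith [mul_nonneg hc0.le (sub_nonneg.2 h1), mul_nonneg hc0.le (sub_nonneg.2 h3),
          mul_nonneg (sub_nonneg.2 hmlec) hJ]
    apply le_antisymm
    · have hbdd : BddBelow (Set.range fun η : ℝ =>
          η + c * (max (J - η) 0 + max (-η) 0)) := by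
        refine ⟨min 1 c * J, ?_⟩
        rintro _ ⟨η, rfl⟩
        exact lower η
      rcases le_or_gt c 1 with h | h
      · have : min 1 c = c := min_eq_right h
        rw [this]
        have := ciInf_le hbdd 0
        simpa [max_eq_left hJ] using this
      · have : min 1 c = 1 := min_eq_left h.le
        rw [this, one_mul]
        have := ciInf_le hbdd J
        simpa [max_eq_right (neg_nonpos.2 hJ)] using this
    · exact le_ciInf lower
  · intro Jseq h0 hrec
    constructor
    · intro hhalf
      have hclt : c < 1 := by
        rw [hcdef, div_lt_one (by linarith)]; linarith
      have hmin : min 1 c = c := min_eq_right hclt.le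
      set L : ℝ := 2 * α / (2 * α - 1) with hL
      have hne : 2 * α - 1 ≠ 0 := by linarith
      have hne2 : 2 * α ≠ 0 := by linarith
      have hfix : 1 + c * L = L := by
        rw [hcdef, hL]; field_simp; ring
      have hform : ∀ k, Jseq k = L * (1 - c ^ k) := by
        intro k
        induction k with
        | zero => simp [h0]
        | succ k ih =>
          rw [hrec k, hmin, ih, pow_succ]
          nlinarith [hfix]
      have : Tendsto (fun k : ℕ => L * (1 - c ^ k)) atTop (𝓝 (L * (1 - 0))) :=
        (tendsto_const_nhds.sub
          (tendsto_pow_atTop_nhds_zero_of_lt_one hc0.le hclt)).const_mul L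
      rw [mul_sub, mul_zero, sub_zero, mul_one] at this
      exact Tendsto.congr (fun k => (hform k).symm) this
    · intro hle
      have hc1 : 1 ≤ c := by
        rw [hcdef, le_div_iff₀ (by linarith)]; linarith
      have hmin : min 1 c = 1 := min_eq_left hc1
      have hform : ∀ k, Jseq k = (k : ℝ) := by
        intro k
        induction k with
        | zero => simp [h0]
        | succ k ih => rw [hrec k, hmin, ih]; push_cast; ring
      exact Tendsto.congr (fun k => (hform k).symm) tendsto_natCast_atTop_atTop
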